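/- Let A be an m×n real matrix, b ∈ R^m, and define R(u) = ‖A ⊞ u - b‖_∞ where (A ⊞ u)_i = max_j(a_{ij} + u_j). If u* is a minimizer of R and R(u*) > 0, then R is not differentiable at u*. (Equivalently, the gradient ∇R(u*) does not exist.) -/

import Mathlib

open Topology Filter


/-- Max-plus matrix-vector product: `(A ⊞ u) i = max_j (A i j + u j)`. -/
noncomputable def maxPlus {m n : ℕ} (A : Matrix (Fin (m + 1)) (Fin (n + 1)) ℝ)
    (u : Fin (n + 1) → ℝ) : Fin (m + 1) → ℝ :=
  fun i => ⨆ j, (A i j + u j)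

private lemma iSup_add_const {k : ℕ} (f : Fin (k + 1) → ℝ) (t : ℝ) :
    (⨆ j, f j) + t = ⨆ j, (f j + t) := by
  have h1 : BddAbove (Set.range f) := (Set.finite_range f).bddAbove
  have h2 : BddAbove (Set.range fun j => f j + t) := (Set.finite_range _).bddAbove
  apply le_antisymm
  · exact ciSup_add_le fun i => le_ciSup h2 i
  · exact ciSup_le fun i => add_le_add_left (le_ciSup h1 i) t

theorem minimizer_not_differentiable {m n : ℕ}
    (A : Matrix (Fin (m + 1)) (Fin (n + 1)) ℝ) (b : Fin (m + 1) → ℝ)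
    (R : (Fin (n + 1) → ℝ) → ℝ) (hR : ∀ u, R u = ‖maxPlus A u - b‖)
    (ustar : Fin (n + 1) → ℝ) (hmin : ∀ u, R ustar ≤ R u) (hpos : 0 < R ustar) :
    ¬ DifferentiableAt ℝ R ustar := by
  intro hdiff
  set v : Fin (m + 1) → ℝ := maxPlus A ustar - b with hv
  -- there is a coordinate achieving the sup norm
  obtain ⟨i₀, -, hi₀⟩ := Finset.exists_mem_eq_sup (Finset.univ : Finset (Fin (m + 1)))
    Finset.univ_nonempty (fun i => ‖v i‖₊)
  have hnorm_i₀ : |v i₀| = ‖v‖ := by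
    have := Pi.norm_def v
    rw [this, hi₀]
    simp [Real.norm_eq_abs]
  -- the perturbed function along the all-ones direction
  set w : Fin (n + 1) → ℝ := fun _ => (1 : ℝ) with hw
  have hkey : ∀ t : ℝ, ∀ i, maxPlus A (ustar + t • w) i = maxPlus A ustar i + t := by
    intro t i
    simp only [maxPlus, hw, Pi.add_apply, Pi.smul_apply, smul_eq_mul, mul_one]
    rw [iSup_add_const (fun j => A i j + ustar j) t]
    congr 1; funext j; ring
  have hbound : ∀ t : ℝ, |v i₀ + t| ≤ R (ustar + t • w) := by
    intro t
    rw [hR]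
    have : (maxPlus A (ustar + t • w) - b) i₀ = v i₀ + t := by
      simp [hv, hkey t i₀]; ring
    calc |v i₀ + t| = ‖(maxPlus A (ustar + t • w) - b) i₀‖ := by rw [this, Real.norm_eq_abs]
      _ ≤ ‖maxPlus A (ustar + t • w) - b‖ := norm_le_pi_norm _ i₀
  -- the derivative of R along the curve t ↦ ustar + t • w is 0
  have hlocmin : IsLocalMin R ustar := (isMinOn_univ_iff.mpr hmin).isLocalMin Filter.univ_mem
  have hfd : HasFDerivAt R (0 : (Fin (n + 1) → ℝ) →L[ℝ] ℝ) ustar := by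
    have := hlocmin.fderiv_eq_zero
    simpa [this] using hdiff.hasFDerivAt
  have hc : HasDerivAt (fun t : ℝ => ustar + t • w) w 0 := by
    simpa using ((hasDerivAt_id (0 : ℝ)).smul_const w).const_add ustar
  have hg : HasDerivAt (fun t : ℝ => R (ustar + t • w)) 0 0 := by
    have h0 : (fun t : ℝ => ustar + t • w) 0 = ustar := by simp
    have := (h0 ▸ hfd).comp_hasDerivAt 0 hc
    simp at this
    exact this
  have hslope : Filter.Tendsto (slope (fun t : ℝ => R (ustar + t • w)) 0) (𝓝[≠] (0:ℝ)) (𝓝 0) :=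
    hasDerivAt_iff_tendsto_slope.mp hg
  have hg0 : R (ustar + (0:ℝ) • w) = R ustar := by simp
  -- case analysis on the sign of v i₀
  have habs : v i₀ = R ustar ∨ v i₀ = -(R ustar) := by
    rcases abs_cases (v i₀) with ⟨h1, -⟩ | ⟨h1, -⟩
    · left; rw [← h1, hnorm_i₀, hR]
    · right; rw [hR]; rw [← hnorm_i₀] at *; linarith
  rcases habs with hcase | hcase
  · -- for t > 0 the slope is ≥ 1, contradicting limit 0
    have htend : Filter.Tendsto (slope (fun t : ℝ => R (ustar + t • w)) 0) (𝓝[>] (0:ℝ)) (𝓝 0) :=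
      hslope.mono_left (nhdsWithin_mono 0 fun t ht => ne_of_gt ht)
    have hev : ∀ t ∈ Set.Ioi (0:ℝ), (1:ℝ) ≤ slope (fun t : ℝ => R (ustar + t • w)) 0 t := by
      intro t ht
      have ht' : (0:ℝ) < t := ht
      have hb := hbound t
      have : R ustar + t ≤ R (ustar + t • w) := by
        calc R ustar + t = v i₀ + t := by rw [hcase]
          _ ≤ |v i₀ + t| := le_abs_self _
          _ ≤ _ := hb
      rw [slope_def_field, sub_zero, le_div_iff₀ ht', one_mul, hg0]
      linarith
    have : (1:ℝ) ≤ 0 := by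
      refine ge_of_tendsto htend ?_
      filter_upwards [self_mem_nhdsWithin] using hev
    linarith
  · -- for t < 0 the slope is ≤ -1
    have htend : Filter.Tendsto (slope (fun t : ℝ => R (ustar + t • w)) 0) (𝓝[<] (0:ℝ)) (𝓝 0) :=
      hslope.mono_left (nhdsWithin_mono 0 fun t ht => ne_of_lt ht)
    have hev : ∀ t ∈ Set.Iio (0:ℝ), slope (fun t : ℝ => R (ustar + t • w)) 0 t ≤ -1 := by
      intro t ht
      have ht' : t < 0 := ht
      have hb := hbound t
      have h2 : R ustar - t ≤ R (ustar + t • w) := by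
        calc R ustar - t = -(v i₀ + t) := by rw [hcase]; ring
          _ ≤ |v i₀ + t| := neg_le_abs _
          _ ≤ _ := hb
      rw [slope_def_field, sub_zero, div_le_iff_of_neg ht', hg0]
      linarith
    have : (0:ℝ) ≤ -1 := by
      refine le_of_tendsto htend ?_
      filter_upwards [self_mem_nhdsWithin] using hev
    linarith
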